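/- Let Π := ∏_{n≥1}(1 − qⁿ) ∈ ℚ[[q]]. Then 12·θ(Π²) = (E₂ − 1)·Π² as formal power series. (This is the statement D₁(η²) = 0 for the Dedekind eta function η = q^{1/24}Π, after removing the fractional power q^{1/12} from η².) -/

import Mathlib

/-- The theta operator `θ(f) = q·(df/dq)` on formal power series over `ℚ`. -/
noncomputable def theta (f : PowerSeries ℚ) : PowerSeries ℚ :=
  PowerSeries.mk fun n => (n : ℚ) * PowerSeries.coeff n f

/-- The weight `2` Eisenstein series `E₂ = 1 − 24·∑_{n≥1} σ₁(n)·qⁿ` as a formal power series. -/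
noncomputable def E2 : PowerSeries ℚ :=
  PowerSeries.mk fun n => if n = 0 then 1 else -24 * ∑ d ∈ n.divisors, (d : ℚ)

/-- `Φ` is the infinite product `∏_{n≥1}(1 − qⁿ)` in `ℚ[[q]]`, characterized by the fact
that its coefficients up to `q^N` agree with those of the finite product
`∏_{n=1}^{N}(1 − qⁿ)` for every `N` (the `n`-th factor is `≡ 1 mod qⁿ`). -/
def IsEulerProd (Φ : PowerSeries ℚ) : Prop :=
  ∀ N k : ℕ, k ≤ N →
    PowerSeries.coeff k Φ =
      PowerSeries.coeff k (∏ n ∈ Finset.range N, (1 - (PowerSeries.X : PowerSeries ℚ) ^ (n + 1)))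

open PowerSeries Finset

lemma coeff_theta (f : PowerSeries ℚ) (n : ℕ) :
    coeff n (theta f) = (n : ℚ) * coeff n f := by
  simp [theta]

lemma theta_eq (f : PowerSeries ℚ) : theta f = X * d⁄dX ℚ f := by
  ext n
  cases n with
  | zero => simp [coeff_theta]
  | succ n =>
    rw [coeff_theta, coeff_succ_X_mul, coeff_derivative]
    push_cast; ring

lemma theta_mul (f g : PowerSeries ℚ) :
    theta (f * g) = theta f * g + f * theta g := by
  simp only [theta_eq, Derivation.leibniz, smul_eq_mul]
  ring

lemma theta_one : theta (1 : PowerSeries ℚ) = 0 := by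
  simp [theta_eq]

lemma theta_sub (f g : PowerSeries ℚ) : theta (f - g) = theta f - theta g := by
  ext n; simp [coeff_theta, map_sub]; ring

lemma theta_X_pow (m : ℕ) : theta ((X : PowerSeries ℚ) ^ m) = C (m : ℚ) * X ^ m := by
  ext n
  rw [coeff_theta, coeff_C_mul, coeff_X_pow]
  split_ifs with h
  · subst h; ring
  · ring

/-- Geometric series `1/(1 - X^m)`. -/
noncomputable def G (m : ℕ) : PowerSeries ℚ :=
  PowerSeries.mk fun n => if m ∣ n then 1 else 0

lemma G_mul (m : ℕ) (hm : 0 < m) : (1 - (X : PowerSeries ℚ) ^ m) * G m = 1 := by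
  ext n
  rw [sub_mul, one_mul, map_sub, mul_comm, coeff_mul_X_pow']
  rcases Nat.eq_zero_or_pos n with rfl | hn
  · simp [G, hm.ne', Nat.not_le_of_lt hm]
  · rw [coeff_one, if_neg hn.ne']
    split_ifs with h
    · simp only [G, coeff_mk]
      have : m ∣ n ↔ m ∣ n - m := by
        constructor
        · intro hd; exact (Nat.dvd_sub hd dvd_rfl)
        · intro hd; have := Nat.dvd_add hd (dvd_refl m); rwa [Nat.sub_add_cancel h] at this
      simp only [this, sub_self]
    · simp only [G, coeff_mk, sub_zero]
      rw [if_neg]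
      intro hd
      exact h (Nat.le_of_dvd hn hd)

noncomputable def P (N : ℕ) : PowerSeries ℚ :=
  ∏ n ∈ Finset.range N, (1 - (X : PowerSeries ℚ) ^ (n + 1))

noncomputable def L (N : ℕ) : PowerSeries ℚ :=
  ∑ m ∈ Finset.range N, C ((m : ℚ) + 1) * X ^ (m + 1) * G (m + 1)

lemma key (N : ℕ) : theta (P N ^ 2) = -2 * (L N * P N ^ 2) := by
  induction N with
  | zero => simp [P, L, theta_one]
  | succ N ih =>
    have hG := G_mul (N + 1) (Nat.succ_pos N)
    have hP : P (N + 1) = P N * (1 - X ^ (N + 1)) := by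
      rw [P, Finset.prod_range_succ]; rfl
    have hL : L (N + 1) = L N + C ((N : ℚ) + 1) * X ^ (N + 1) * G (N + 1) := by
      rw [L, Finset.sum_range_succ]; rfl
    have hth : theta (1 - (X : PowerSeries ℚ) ^ (N + 1)) = -(C ((N : ℚ) + 1) * X ^ (N + 1)) := by
      rw [theta_sub, theta_one, theta_X_pow]
      push_cast
      ring
    rw [hP, hL, mul_pow, pow_two, pow_two, theta_mul, theta_mul, theta_mul, hth]
    rw [pow_two, theta_mul] at ih
    linear_combination (1 - (X : PowerSeries ℚ)^(N+1)) * ((1 - X^(N+1))) * ih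
      + (2 * C ((N : ℚ) + 1) * X ^ (N + 1) * (P N * P N) * (1 - X ^ (N + 1))) * hG

lemma coeff_L {N k : ℕ} (hk : k ≤ N) :
    coeff k (L N) = if k = 0 then 0 else ∑ d ∈ k.divisors, (d : ℚ) := by
  rw [L, map_sum]
  have hterm : ∀ m ∈ Finset.range N,
      coeff k (C ((m : ℚ) + 1) * X ^ (m + 1) * G (m + 1)) =
      if m + 1 ∈ k.divisors then ((m : ℚ) + 1) else 0 := by
    intro m hm
    rw [mul_assoc, coeff_C_mul, mul_comm ((X : PowerSeries ℚ) ^ (m+1)), coeff_mul_X_pow']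
    simp only [G, coeff_mk, Nat.mem_divisors]
    rcases Nat.eq_zero_or_pos k with rfl | hkpos
    · simp
    · by_cases hd : (m + 1) ∣ k
      · have hle : m + 1 ≤ k := Nat.le_of_dvd hkpos hd
        have h2 : m + 1 ∣ k - (m + 1) := Nat.dvd_sub hd dvd_rfl
        simp [hd, hle, h2, hkpos.ne']
      · by_cases hle : m + 1 ≤ k
        · have hnd : ¬ (m + 1) ∣ k - (m + 1) := fun h => hd (by
            have := Nat.dvd_add h (dvd_refl (m + 1))
            rwa [Nat.sub_add_cancel hle] at this)
          simp [hle, hnd, hd]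
        · simp [hle, hd]
  rw [Finset.sum_congr rfl hterm]
  rcases Nat.eq_zero_or_pos k with rfl | hkpos
  · simp
  · rw [if_neg hkpos.ne']
    have himg : ∑ x ∈ Finset.range N, (if x + 1 ∈ k.divisors then ((x : ℚ) + 1) else 0) =
        ∑ d ∈ (Finset.range N).image (· + 1), (if d ∈ k.divisors then (d : ℚ) else 0) := by
      rw [Finset.sum_image (by intro a _ b _ h; simp only at h; omega)]
      apply Finset.sum_congr rfl
      intro x _
      push_cast
      rfl
    rw [himg, Finset.sum_ite_mem]
    have hsub : k.divisors ⊆ (Finset.range N).image (· + 1) := by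
      intro d hd
      rw [Nat.mem_divisors] at hd
      have hd1 : 1 ≤ d := Nat.pos_of_dvd_of_pos hd.1 hkpos
      have hdk : d ≤ k := Nat.le_of_dvd hkpos hd.1
      exact Finset.mem_image.mpr ⟨d - 1, Finset.mem_range.mpr (by omega), by omega⟩
    rw [Finset.inter_eq_right.mpr hsub]

lemma coeff_E2_sub_one {i k : ℕ} (hik : i ≤ k) :
    coeff i (E2 - 1) = -24 * coeff i (L k) := by
  rw [map_sub, coeff_L hik, coeff_one, E2, coeff_mk]
  split_ifs with h <;> simp

lemma coeff_num_mul (a : ℚ) (f : PowerSeries ℚ) (k : ℕ) :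
    coeff k (C a * f) = a * coeff k f := coeff_C_mul k f a


/-- With `Π := ∏_{n≥1}(1 − qⁿ) ∈ ℚ[[q]]`, one has `12·θ(Π²) = (E₂ − 1)·Π²`: this is the
statement `D₁(η²) = 0` for the Dedekind eta function `η = q^{1/24}·Π`, after removing the
fractional power `q^{1/12}` from `η²`. -/
theorem twelve_theta_sq_eq (Φ : PowerSeries ℚ) (hΦ : IsEulerProd Φ) :
    (12 : PowerSeries ℚ) * theta (Φ ^ 2) = (E2 - 1) * Φ ^ 2 := by
  have h12 : (12 : PowerSeries ℚ) = C 12 := (map_ofNat (C (R := ℚ)) 12).symm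
  have hsq : ∀ N k : ℕ, k ≤ N → coeff k (Φ ^ 2) = coeff k (P N ^ 2) := by
    intro N k hk
    rw [pow_two, pow_two, coeff_mul, coeff_mul]
    apply Finset.sum_congr rfl
    intro ij hij
    rw [Finset.HasAntidiagonal.mem_antidiagonal] at hij
    rw [hΦ N ij.1 (by omega), hΦ N ij.2 (by omega)]
    rfl
  ext k
  have key12 : C 12 * theta (P k ^ 2) = C (-24) * (L k * P k ^ 2) := by
    rw [key]
    have : (C 12 : PowerSeries ℚ) * (-2) = C (-24) := by
      rw [show ((-2 : PowerSeries ℚ)) = C (-2) by rw [map_neg, map_ofNat], ← map_mul]; norm_num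
    rw [← mul_assoc, this]
  calc coeff k ((12 : PowerSeries ℚ) * theta (Φ ^ 2))
      = 12 * ((k : ℚ) * coeff k (Φ ^ 2)) := by
        rw [h12, coeff_num_mul, coeff_theta]
    _ = 12 * ((k : ℚ) * coeff k (P k ^ 2)) := by rw [hsq k k le_rfl]
    _ = coeff k (C 12 * theta (P k ^ 2)) := by rw [coeff_num_mul, coeff_theta]
    _ = -24 * coeff k (L k * P k ^ 2) := by rw [key12, coeff_num_mul]
    _ = ∑ ij ∈ Finset.HasAntidiagonal.antidiagonal k, -24 * (coeff ij.1 (L k) * coeff ij.2 (P k ^ 2)) := by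
        rw [coeff_mul, Finset.mul_sum]
    _ = ∑ ij ∈ Finset.HasAntidiagonal.antidiagonal k, coeff ij.1 (E2 - 1) * coeff ij.2 (Φ ^ 2) := by
        apply Finset.sum_congr rfl
        intro ij hij
        rw [Finset.HasAntidiagonal.mem_antidiagonal] at hij
        rw [coeff_E2_sub_one (show ij.1 ≤ k by omega), hsq k ij.2 (by omega)]
        ring
    _ = coeff k ((E2 - 1) * Φ ^ 2) := (coeff_mul k _ _).symm
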